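/- Let R be a commutative ring, q ∈ R, A a commutative R-algebra and y ∈ A. On the free A-module A⟨ξ⟩ with basis (ξ^{[n]})_{n∈ℕ}, the multiplication rule ξ^{[m]} ξ^{[n]} = Σ_{i=0}^{min(m,n)} (−1)^i q^{i(i−1)/2} (m+n−i choose m)_q (m choose i)_q y^i ξ^{[m+n−i]} defines a structure of commutative (associative, unital, with unit ξ^{[0]}) A-algebra; the A-linear map A[ξ] → A⟨ξ⟩ sending the twisted power ξ^{(n)} to (n)_q! ξ^{[n]} is a morphism of A-algebras; and for every n ∈ ℕ the A-submodule I^{[n+1]} spanned by the ξ^{[k]} with k > n is an ideal of A⟨ξ⟩. -/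

import Mathlib

def qInt {R : Type*} [CommRing R] (q : R) (m : ℕ) : R := ∑ i ∈ Finset.range m, q ^ i

def qFact {R : Type*} [CommRing R] (q : R) : ℕ → R
  | 0 => 1
  | n + 1 => qFact q n * qInt q (n + 1)

def qChoose {R : Type*} [CommRing R] (q : R) : ℕ → ℕ → R
  | _, 0 => 1
  | 0, _ + 1 => 0
  | n + 1, k + 1 => qChoose q n k + q ^ (k + 1) * qChoose q n (k + 1)

namespace QAux
variable {R : Type*} [CommRing R] (q : R)

lemma qInt_zero : qInt q 0 = 0 := by simp [qInt]
lemma qInt_one : qInt q 1 = 1 := by simp [qInt]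
lemma qInt_add (a b : ℕ) : qInt q (a + b) = qInt q a + q ^ a * qInt q b := by
  simp [qInt, Finset.sum_range_add, Finset.mul_sum, pow_add]

lemma q_sub_one_mul_qInt (n : ℕ) : (q - 1) * qInt q n + 1 = q ^ n := by
  induction n with
  | zero => simp [qInt_zero]
  | succ n ih =>
    rw [qInt_add q n 1, qInt_one, pow_succ]
    linear_combination ih

lemma qFact_zero : qFact q 0 = 1 := rfl
lemma qFact_succ (n : ℕ) : qFact q (n + 1) = qFact q n * qInt q (n + 1) := rfl

lemma qChoose_zero_right (n : ℕ) : qChoose q n 0 = 1 := by cases n <;> rfl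

lemma qChoose_succ_succ (n k : ℕ) :
    qChoose q (n + 1) (k + 1) = qChoose q n k + q ^ (k + 1) * qChoose q n (k + 1) := rfl

lemma qChoose_eq_zero_of_lt : ∀ {n k : ℕ}, n < k → qChoose q n k = 0
  | 0, _ + 1, _ => rfl
  | n + 1, k + 1, h => by
    rw [qChoose_succ_succ, qChoose_eq_zero_of_lt (by omega), qChoose_eq_zero_of_lt (by omega)]
    ring

lemma qChoose_self : ∀ n : ℕ, qChoose q n n = 1
  | 0 => rfl
  | n + 1 => by
    rw [qChoose_succ_succ, qChoose_self n,
      qChoose_eq_zero_of_lt q (Nat.lt_succ_self n)]; ring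

lemma qChoose_one_right : ∀ n : ℕ, qChoose q n 1 = qInt q n
  | 0 => by
    rw [qChoose_eq_zero_of_lt q (Nat.lt_succ_self 0), qInt_zero]
  | n + 1 => by
    rw [qChoose_succ_succ, qChoose_zero_right, qChoose_one_right n,
      show n + 1 = 1 + n by omega, qInt_add q 1 n, qInt_one, pow_one]

lemma qChoose_absorb : ∀ m i : ℕ, i ≤ m →
    qInt q (i + 1) * qChoose q m (i + 1) = qInt q (m - i) * qChoose q m i
  | 0, 0, _ => by
    rw [qChoose_eq_zero_of_lt q (Nat.lt_succ_self 0)]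
    simp [qInt_zero]
  | m + 1, 0, _ => by
    rw [zero_add, qInt_one, one_mul, qChoose_one_right, qChoose_zero_right, Nat.sub_zero, mul_one]
  | m + 1, j + 1, h => by
    rcases Nat.lt_or_ge (j + 1) (m + 1) with h' | h'
    · have hjm : j + 1 ≤ m := by omega
      have ih1 := qChoose_absorb m (j + 1) hjm
      have ih2 := qChoose_absorb m j (by omega)
      rw [qChoose_succ_succ q m (j + 1), qChoose_succ_succ q m j]
      rw [show m + 1 - (j + 1) = (m - (j + 1)) + 1 by omega]
      rw [show m - j = (m - (j + 1)) + 1 by omega] at ih2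
      rw [qInt_add q (j + 1) 1, qInt_one, mul_one] at ih1 ⊢
      rw [qInt_add q (m - (j + 1)) 1, qInt_one, mul_one] at ih2 ⊢
      have hq := q_sub_one_mul_qInt q (m - (j + 1))
      linear_combination q ^ (j + 1 + 1) * ih1 + ih2 +
        q ^ (j + 1) * qChoose q m (j + 1) * hq
    · obtain rfl : j = m := by omega
      rw [qChoose_eq_zero_of_lt q (Nat.lt_succ_self (j + 1)), qChoose_self, Nat.sub_self, qInt_zero]
      ring

lemma qFact_mul_qChoose : ∀ n k : ℕ, k ≤ n →
    qFact q k * qFact q (n - k) * qChoose q n k = qFact q n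
  | _, 0, _ => by simp [qFact_zero, qChoose_zero_right]
  | 0, _ + 1, h => by omega
  | n + 1, k + 1, h => by
    have hk : k ≤ n := by omega
    have ih1 := qFact_mul_qChoose n k hk
    rw [qChoose_succ_succ, show n + 1 - (k + 1) = n - k by omega]
    rcases Nat.lt_or_ge n (k + 1) with h' | h'
    · obtain rfl : k = n := by omega
      rw [qChoose_eq_zero_of_lt q (Nat.lt_succ_self k), qChoose_self, Nat.sub_self, qFact_succ]
      simp [qFact_zero]
    · have ih2 := qFact_mul_qChoose n (k + 1) h'
      rw [show n - k = n - (k + 1) + 1 by omega] at ih1 ⊢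
      have key : qInt q (k + 1) + q ^ (k + 1) * qInt q (n - (k + 1) + 1) = qInt q (n + 1) := by
        rw [← qInt_add q (k + 1) (n - (k + 1) + 1),
          show k + 1 + (n - (k + 1) + 1) = n + 1 by omega]
      rw [qFact_succ q k, qFact_succ q n, qFact_succ q (n - (k+1))] at *
      linear_combination qInt q (k + 1) * ih1 +
        q ^ (k + 1) * qInt q (n - (k + 1) + 1) * ih2 + qFact q n * key

end QAux

noncomputable def twistedPow {A : Type*} [CommRing A] (q y : A) (n : ℕ) : Polynomial A :=
  ∏ i ∈ Finset.range n, (Polynomial.X + Polynomial.C (qInt q i * y))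

namespace QAux
open Polynomial
variable {A : Type*} [CommRing A] (q y : A)

/-- the symmetric coefficient in the twisted-power product expansion -/
def dc (q y : A) (m n i : ℕ) : A :=
  (-1 : A) ^ i * q ^ (i * (i - 1) / 2) * qFact q i * qChoose q m i * qChoose q n i * y ^ i

lemma dc_symm (m n i : ℕ) : dc q y m n i = dc q y n m i := by unfold dc; ring

lemma dc_zero_right (m n : ℕ) : dc q y m n 0 = 1 := by simp [dc, qChoose_zero_right, qFact_zero]

lemma dc_eq_zero_left {m i : ℕ} (h : m < i) (n : ℕ) : dc q y m n i = 0 := by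
  rw [dc, qChoose_eq_zero_of_lt q h]; ring

lemma dc_eq_zero_right {n i : ℕ} (h : n < i) (m : ℕ) : dc q y m n i = 0 := by
  rw [dc, qChoose_eq_zero_of_lt q (k := i) h]; ring

lemma tri_succ (i : ℕ) : (i + 1) * ((i + 1) - 1) / 2 = i * (i - 1) / 2 + i := by
  rw [← Nat.choose_two_right, ← Nat.choose_two_right,
    Nat.choose_succ_succ i 1, Nat.choose_one_right, Nat.add_comm]

/-- the scalar core identity -/
lemma sc {m n i : ℕ} (him : i ≤ m) (hin : i ≤ n) :
    qInt q (i+1) * qChoose q m (i+1) * qChoose q n i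
      + q^(i+1) * (qInt q (i+1) * qChoose q m (i+1)) * qChoose q n (i+1)
    = qInt q (i+1) * qChoose q m (i+1) * qChoose q n (i+1)
      + q^(n-i) * (qInt q (m-i) * qChoose q m i) * qChoose q n i := by
  have abs_m := qChoose_absorb q m i him
  have abs_n := qChoose_absorb q n i hin
  have hq1 := q_sub_one_mul_qInt q (n - i)
  have hq2 := q_sub_one_mul_qInt q (i + 1)
  linear_combination q^(n-i) * qChoose q n i * abs_m
    + (q - 1) * qInt q (i+1) * qChoose q m (i+1) * abs_n
    + qInt q (i+1) * qChoose q m (i+1) * qChoose q n i * hq1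
    - qInt q (i+1) * qChoose q m (i+1) * qChoose q n (i+1) * hq2

/-- the recurrence for the expansion coefficients -/
lemma dc_rec {i n : ℕ} (hin : i ≤ n) (m : ℕ) :
    dc q y m (n+1) (i+1)
      = dc q y m n (i+1) + dc q y m n i * ((qInt q n - qInt q (m + n - i)) * y) := by
  rcases Nat.lt_or_ge m i with h' | h'
  · rw [dc_eq_zero_left q y (by omega), dc_eq_zero_left q y (by omega),
      dc_eq_zero_left q y (by omega)]
    ring
  · -- i ≤ m
    have hd : qInt q (m + n - i) = qInt q n + q ^ n * qInt q (m - i) := by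
      rw [show m + n - i = n + (m - i) by omega, qInt_add]
    rw [hd]
    have ht : q ^ ((i + 1) * ((i + 1) - 1) / 2) = q ^ (i * (i - 1) / 2) * q ^ i := by
      rw [tri_succ, pow_add]
    have hp : q ^ (n - i) * q ^ i = q ^ n := by
      rw [← pow_add, Nat.sub_add_cancel hin]
    have hsc := sc q h' hin
    unfold dc
    rw [ht, qFact_succ, qChoose_succ_succ q n i]
    show (-1:A)^(i+1) * (q ^ (i * (i - 1) / 2) * q ^ i) * (qFact q i * qInt q (i+1)) *
        qChoose q m (i+1) * (qChoose q n i + q ^ (i+1) * qChoose q n (i+1)) * y^(i+1) = _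
    linear_combination ((-1:A)^(i+1) * q ^ (i * (i-1)/2) * qFact q i * y^(i+1) * q^i) * hsc
      + ((-1:A)^(i+1) * q ^ (i * (i-1)/2) * qFact q i * y^(i+1) * qInt q (m-i) * qChoose q m i * qChoose q n i) * hp

lemma tp_zero : twistedPow q y 0 = 1 := by simp [twistedPow]

lemma tp_succ (n : ℕ) :
    twistedPow q y (n + 1) = twistedPow q y n * (X + C (qInt q n * y)) :=
  Finset.prod_range_succ _ n

lemma tp_mul_lin (n j : ℕ) :
    twistedPow q y j * (X + C (qInt q n * y)) =
      twistedPow q y (j + 1) + C ((qInt q n - qInt q j) * y) * twistedPow q y j := by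
  rw [tp_succ, sub_mul, map_sub]
  ring

/-- KEY: product expansion of twisted powers -/
lemma key (m : ℕ) : ∀ n : ℕ, twistedPow q y m * twistedPow q y n =
    ∑ i ∈ Finset.range (n + 1), C (dc q y m n i) * twistedPow q y (m + n - i)
  | 0 => by
    simp [tp_zero, dc_zero_right]
  | n + 1 => by
    have hstep : twistedPow q y m * twistedPow q y (n + 1)
        = (∑ i ∈ Finset.range (n + 1), C (dc q y m n i) * twistedPow q y (m + n - i))
            * (X + C (qInt q n * y)) := by
      rw [tp_succ, ← mul_assoc, key m n]
    rw [hstep, Finset.sum_mul]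
    have step : ∀ i ∈ Finset.range (n + 1),
        C (dc q y m n i) * twistedPow q y (m + n - i) * (X + C (qInt q n * y)) =
          C (dc q y m n i) * twistedPow q y (m + n - i + 1)
          + C (dc q y m n i * ((qInt q n - qInt q (m + n - i)) * y)) * twistedPow q y (m + n - i) := by
      intro i _
      rw [mul_assoc, tp_mul_lin]
      simp only [map_mul, map_sub]
      ring
    rw [Finset.sum_congr rfl step, Finset.sum_add_distrib]
    rw [Finset.sum_range_succ'
      (fun i => C (dc q y m (n+1) i) * twistedPow q y (m + (n+1) - i)) (n+1)]
    have hre : ∀ i ∈ Finset.range (n + 1),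
        C (dc q y m (n+1) (i+1)) * twistedPow q y (m + (n+1) - (i+1))
        = C (dc q y m n (i+1)) * twistedPow q y (m + n - i)
          + C (dc q y m n i * ((qInt q n - qInt q (m + n - i)) * y)) * twistedPow q y (m + n - i) := by
      intro i hi
      rw [Finset.mem_range] at hi
      rw [show m + (n+1) - (i+1) = m + n - i by omega, dc_rec q y (by omega), map_add, add_mul]
    rw [Finset.sum_congr rfl hre, Finset.sum_add_distrib]
    have hS1 : ∑ i ∈ Finset.range (n+1), C (dc q y m n i) * twistedPow q y (m + n - i + 1)
        = (∑ i ∈ Finset.range (n+1), C (dc q y m n (i+1)) * twistedPow q y (m + n - i))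
          + C (dc q y m (n+1) 0) * twistedPow q y (m + (n+1) - 0) := by
      rw [Finset.sum_range_succ'
          (fun i => C (dc q y m n i) * twistedPow q y (m + n - i + 1)) n,
        Finset.sum_range_succ
          (fun i => C (dc q y m n (i+1)) * twistedPow q y (m + n - i)) n]
      have hmid : ∑ i ∈ Finset.range n, C (dc q y m n (i+1)) * twistedPow q y (m + n - (i+1) + 1)
          = ∑ i ∈ Finset.range n, C (dc q y m n (i+1)) * twistedPow q y (m + n - i) :=
        Finset.sum_congr rfl (fun i hi => by
          rw [Finset.mem_range] at hi
          rw [show m + n - (i+1) + 1 = m + n - i by omega])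
      rw [hmid, dc_eq_zero_right q y (Nat.lt_succ_self n) m, dc_zero_right, dc_zero_right,
        show m + (n+1) - 0 = m + n - 0 + 1 by omega]
      simp only [map_zero, map_one, zero_mul, one_mul, add_zero]
    rw [hS1]
    ring

end QAux

/-- The coefficient `(−1)^i q^{i(i−1)/2} (m+n−i choose m)_q (m choose i)_q y^i` appearing in the
multiplication rule of the twisted divided power polynomial ring. -/
def dpCoeff {A : Type*} [CommRing A] (q y : A) (m n i : ℕ) : A :=
  (-1 : A) ^ i * q ^ (i * (i - 1) / 2) * qChoose q (m + n - i) m * qChoose q m i * y ^ i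

namespace QAux
open Polynomial Finsupp
variable {A : Type*} [CommRing A] (q y : A)

noncomputable def mulB (q y : A) (m n : ℕ) : ℕ →₀ A :=
  ∑ i ∈ Finset.range (min m n + 1), dpCoeff q y m n i • Finsupp.single (m + n - i) (1 : A)

noncomputable def mulL (q y : A) : (ℕ →₀ A) →ₗ[A] (ℕ →₀ A) →ₗ[A] (ℕ →₀ A) :=
  Finsupp.lsum A fun m => LinearMap.toSpanSingleton A _
    (Finsupp.lsum A fun n => LinearMap.toSpanSingleton A _ (mulB q y m n))

lemma mulL_single_single (m n : ℕ) (a b : A) :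
    mulL q y (Finsupp.single m a) (Finsupp.single n b) = (a * b) • mulB q y m n := by
  rw [mulL, Finsupp.lsum_single, LinearMap.toSpanSingleton_apply, LinearMap.smul_apply,
    Finsupp.lsum_single, LinearMap.toSpanSingleton_apply, smul_smul]

lemma mulL_single_one (m n : ℕ) :
    mulL q y (Finsupp.single m 1) (Finsupp.single n 1) = mulB q y m n := by
  rw [mulL_single_single, mul_one, one_smul]

/-- identity linking `dpCoeff` and `dc` -/
lemma G_id {m n i : ℕ} (him : i ≤ m) (hin : i ≤ n) :
    qFact q m * qFact q n * dpCoeff q y m n i = dc q y m n i * qFact q (m + n - i) := by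
  have h1 := qFact_mul_qChoose q n i hin
  have h2 : qFact q m * qFact q (n - i) * qChoose q (m + n - i) m = qFact q (m + n - i) := by
    have := qFact_mul_qChoose q (m + n - i) m (by omega)
    rwa [show m + n - i - m = n - i by omega] at this
  unfold dpCoeff dc
  linear_combination
    -((-1:A)^i * q ^ (i * (i-1) / 2) * y ^ i * qChoose q m i * qFact q m * qChoose q (m+n-i) m) * h1
    + ((-1:A))^i * q ^ (i * (i-1) / 2) * y ^ i * qFact q i * qChoose q m i * qChoose q n i * h2

/-- the dc-coefficient Finsupp of a product -/
noncomputable def Dco (q y : A) (m n : ℕ) : ℕ →₀ A :=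
  ∑ i ∈ Finset.range (n + 1), Finsupp.single (m + n - i) (dc q y m n i)

noncomputable def EL (q : A) : (ℕ →₀ A) →ₗ[A] (ℕ →₀ A) :=
  Finsupp.lsum A fun k => LinearMap.toSpanSingleton A _ (qFact q k • Finsupp.single k (1 : A))

lemma EL_single (k : ℕ) (c : A) :
    EL q (Finsupp.single k c) = (c * qFact q k) • Finsupp.single k (1 : A) := by
  rw [EL, Finsupp.lsum_single, LinearMap.toSpanSingleton_apply, smul_smul]

lemma EL_single_one (k : ℕ) :
    EL q (Finsupp.single k (1:A)) = qFact q k • Finsupp.single k (1 : A) := by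
  rw [EL_single, one_mul]

/-- bridging: `(m)!(n)! • (ξ^[m] ξ^[n]) = EL (Dco m n)`. -/
lemma fact_smul_mulB (m n : ℕ) :
    (qFact q m * qFact q n) • mulB q y m n = EL q (Dco q y m n) := by
  rw [mulB, Dco, map_sum, Finset.smul_sum]
  have hterm : ∀ i ∈ Finset.range (min m n + 1),
      (qFact q m * qFact q n) • dpCoeff q y m n i • Finsupp.single (m + n - i) (1:A)
        = EL q (Finsupp.single (m + n - i) (dc q y m n i)) := by
    intro i hi
    rw [Finset.mem_range] at hi
    rw [smul_smul, G_id q y (by omega) (by omega), ← EL_single]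
  rw [Finset.sum_congr rfl hterm]
  have hsub : Finset.range (min m n + 1) ⊆ Finset.range (n + 1) :=
    Finset.range_subset_range.2 (by omega)
  refine Finset.sum_subset hsub ?_
  intro i hi hni
  rw [Finset.mem_range] at hi
  rw [Finset.mem_range, not_lt] at hni
  have hmi : m < i := by omega
  rw [dc_eq_zero_left q y hmi, Finsupp.single_zero, map_zero]


lemma tp_coeff_eq_zero : ∀ {n k : ℕ}, n < k → (twistedPow q y n).coeff k = 0
  | 0, k, h => by
    rw [tp_zero, Polynomial.coeff_one, if_neg (by omega)]
  | n + 1, k, h => by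
    obtain ⟨k, rfl⟩ : ∃ k', k = k' + 1 := ⟨k - 1, by omega⟩
    rw [tp_succ, mul_add, Polynomial.coeff_add, Polynomial.coeff_mul_X, Polynomial.coeff_mul_C,
      tp_coeff_eq_zero (show n < k by omega), tp_coeff_eq_zero (show n < k + 1 by omega)]
    ring

lemma tp_coeff_self : ∀ n : ℕ, (twistedPow q y n).coeff n = 1
  | 0 => by rw [tp_zero, Polynomial.coeff_one, if_pos rfl]
  | n + 1 => by
    rw [tp_succ, mul_add, Polynomial.coeff_add, Polynomial.coeff_mul_X, Polynomial.coeff_mul_C,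
      tp_coeff_self n, tp_coeff_eq_zero q y (Nat.lt_succ_self n)]
    ring

lemma tp_span : ∀ N : ℕ, ∀ p : Polynomial A, p.natDegree ≤ N →
    p ∈ Submodule.span A (Set.range (twistedPow q y))
  | 0, p, hp => by
    rw [Polynomial.eq_C_of_natDegree_le_zero hp]
    have : Polynomial.C (p.coeff 0) = p.coeff 0 • twistedPow q y 0 := by
      rw [tp_zero, smul_eq_C_mul, mul_one]
    rw [this]
    exact Submodule.smul_mem _ _ (Submodule.subset_span ⟨0, rfl⟩)
  | N + 1, p, hp => by
    set c := p.coeff (N + 1) with hc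
    have hdeg : (p - Polynomial.C c * twistedPow q y (N + 1)).natDegree ≤ N := by
      rw [Polynomial.natDegree_le_iff_coeff_eq_zero]
      intro k hk
      rw [Polynomial.coeff_sub, Polynomial.coeff_C_mul]
      rcases Nat.lt_or_ge (N + 1) k with h' | h'
      · rw [tp_coeff_eq_zero q y h', Polynomial.coeff_eq_zero_of_natDegree_lt (by omega), mul_zero,
          sub_zero]
      · have : k = N + 1 := by omega
        subst this
        rw [tp_coeff_self, mul_one, sub_self]
    have h1 := tp_span N _ hdeg
    have h2 : Polynomial.C c * twistedPow q y (N + 1) ∈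
        Submodule.span A (Set.range (twistedPow q y)) := by
      rw [← smul_eq_C_mul]
      exact Submodule.smul_mem _ _ (Submodule.subset_span ⟨N + 1, rfl⟩)
    have := Submodule.add_mem _ h1 h2
    rwa [sub_add_cancel] at this

noncomputable def PiL (q y : A) : (ℕ →₀ A) →ₗ[A] Polynomial A :=
  Finsupp.linearCombination A (twistedPow q y)

lemma PiL_single (k : ℕ) (c : A) : PiL q y (Finsupp.single k c) = c • twistedPow q y k :=
  Finsupp.linearCombination_single _ _ _

lemma PiL_Dco (m n : ℕ) : PiL q y (Dco q y m n) = twistedPow q y m * twistedPow q y n := by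
  rw [Dco, map_sum, key q y m n]
  exact Finset.sum_congr rfl fun i _ => by rw [PiL_single, smul_eq_C_mul]

lemma PiL_injective : Function.Injective (PiL q y) := by
  rw [injective_iff_map_eq_zero]
  intro u hu
  by_contra hne
  have hsupp : u.support.Nonempty := Finsupp.support_nonempty_iff.2 hne
  set k := u.support.max' hsupp with hk
  have hcoeff : (PiL q y u).coeff k = u k := by
    rw [PiL, Finsupp.linearCombination_apply, Finsupp.sum, Polynomial.finset_sum_coeff]
    rw [Finset.sum_eq_single k]
    · rw [Polynomial.coeff_smul, tp_coeff_self, smul_eq_mul, mul_one]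
    · intro j hj hjk
      have hjle : j ≤ k := Finset.le_max' _ _ hj
      rw [Polynomial.coeff_smul, tp_coeff_eq_zero q y (by omega), smul_eq_mul, mul_zero]
    · intro hk'
      exact absurd (u.support.max'_mem hsupp) hk'
  rw [hu, Polynomial.coeff_zero] at hcoeff
  exact (Finsupp.mem_support_iff.1 (u.support.max'_mem hsupp)) hcoeff.symm

noncomputable def WR (q y : A) (n : ℕ) : (ℕ →₀ A) →ₗ[A] (ℕ →₀ A) :=
  Finsupp.lsum A fun j => LinearMap.toSpanSingleton A _ (Dco q y j n)

noncomputable def VL (q y : A) (l : ℕ) : (ℕ →₀ A) →ₗ[A] (ℕ →₀ A) :=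
  Finsupp.lsum A fun j => LinearMap.toSpanSingleton A _ (Dco q y l j)

lemma WR_single (n j : ℕ) (b : A) : WR q y n (Finsupp.single j b) = b • Dco q y j n := by
  rw [WR, Finsupp.lsum_single, LinearMap.toSpanSingleton_apply]

lemma VL_single (l j : ℕ) (b : A) : VL q y l (Finsupp.single j b) = b • Dco q y l j := by
  rw [VL, Finsupp.lsum_single, LinearMap.toSpanSingleton_apply]

lemma PiL_WR (n : ℕ) (u : ℕ →₀ A) :
    PiL q y (WR q y n u) = PiL q y u * twistedPow q y n := by
  have : (PiL q y).comp (WR q y n)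
      = (LinearMap.mulRight A (twistedPow q y n)).comp (PiL q y) := by
    apply Finsupp.lhom_ext
    intro j b
    simp only [LinearMap.comp_apply, WR_single, map_smul, PiL_Dco, PiL_single,
      LinearMap.mulRight_apply, smul_mul_assoc]
  exact LinearMap.congr_fun this u

lemma PiL_VL (l : ℕ) (u : ℕ →₀ A) :
    PiL q y (VL q y l u) = twistedPow q y l * PiL q y u := by
  have : (PiL q y).comp (VL q y l)
      = (LinearMap.mulLeft A (twistedPow q y l)).comp (PiL q y) := by
    apply Finsupp.lhom_ext
    intro j b
    simp only [LinearMap.comp_apply, VL_single, map_smul, PiL_Dco, PiL_single,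
      LinearMap.mulLeft_apply, mul_smul_comm]
  exact LinearMap.congr_fun this u

/-- `t k`, the image of the twisted power -/
noncomputable def tk (q : A) (k : ℕ) : ℕ →₀ A := qFact q k • Finsupp.single k (1 : A)

lemma mulL_tk (m n : ℕ) : mulL q y (tk q m) (tk q n) = EL q (Dco q y m n) := by
  simp only [tk, map_smul, LinearMap.smul_apply, mulL_single_one, smul_smul]
  rw [mul_comm (qFact q n) (qFact q m), fact_smul_mulB]

lemma mulL_EL_right (n : ℕ) (u : ℕ →₀ A) :
    mulL q y (EL q u) (tk q n) = EL q (WR q y n u) := by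
  have : ((mulL q y).flip (tk q n)).comp (EL q) = (EL q).comp (WR q y n) := by
    apply Finsupp.lhom_ext
    intro j b
    simp only [LinearMap.comp_apply, LinearMap.flip_apply, WR_single, map_smul, EL_single]
    rw [tk, map_smul, mulL_single_one, smul_smul]
    rw [← fact_smul_mulB, smul_smul]
    congr 1
    ring
  exact LinearMap.congr_fun this u

lemma mulL_EL_left (l : ℕ) (u : ℕ →₀ A) :
    mulL q y (tk q l) (EL q u) = EL q (VL q y l u) := by
  have : ((mulL q y) (tk q l)).comp (EL q) = (EL q).comp (VL q y l) := by
    apply Finsupp.lhom_ext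
    intro j b
    simp only [LinearMap.comp_apply, VL_single, map_smul, EL_single]
    rw [tk, map_smul, LinearMap.smul_apply, mulL_single_one, smul_smul]
    rw [← fact_smul_mulB, smul_smul]
    congr 1
    ring
  exact LinearMap.congr_fun this u


lemma Dco_pad (m n N : ℕ) (hN : n + 1 ≤ N) :
    Dco q y m n = ∑ i ∈ Finset.range N, Finsupp.single (m + n - i) (dc q y m n i) := by
  rw [Dco]
  refine Finset.sum_subset (Finset.range_subset_range.2 hN) ?_
  intro i _ hni
  rw [Finset.mem_range, not_lt] at hni
  rw [dc_eq_zero_right q y (by omega), Finsupp.single_zero]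

lemma Dco_symm (m n : ℕ) : Dco q y m n = Dco q y n m := by
  rw [Dco_pad q y m n (max m n + 1) (by omega), Dco_pad q y n m (max m n + 1) (by omega)]
  refine Finset.sum_congr rfl fun i _ => ?_
  rw [dc_symm, Nat.add_comm m n]

section Domain
variable {A : Type*} [CommRing A] [IsDomain A] (q y : A)

lemma smul_cancel {c : A} (hc : c ≠ 0) {u v : ℕ →₀ A} (h : c • u = c • v) : u = v := by
  ext a
  have := congrArg (fun w : ℕ →₀ A => w a) h
  simp only [Finsupp.smul_apply, smul_eq_mul] at this
  exact mul_left_cancel₀ hc this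

lemma mulB_comm_dom (hq : ∀ k, qFact q k ≠ 0) (m n : ℕ) : mulB q y m n = mulB q y n m := by
  apply smul_cancel (mul_ne_zero (hq m) (hq n))
  rw [fact_smul_mulB, mul_comm (qFact q m) (qFact q n), fact_smul_mulB, Dco_symm]

lemma mulB_assoc_dom (hq : ∀ k, qFact q k ≠ 0) (l m n : ℕ) :
    mulL q y (mulB q y l m) (Finsupp.single n 1)
      = mulL q y (Finsupp.single l 1) (mulB q y m n) := by
  have hWV : WR q y n (Dco q y l m) = VL q y l (Dco q y m n) := by
    apply PiL_injective q y
    rw [PiL_WR, PiL_VL, PiL_Dco, PiL_Dco, mul_assoc]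
  have h3 : mulL q y (mulL q y (tk q l) (tk q m)) (tk q n)
      = mulL q y (tk q l) (mulL q y (tk q m) (tk q n)) := by
    rw [mulL_tk, mulL_EL_right, mulL_tk, mulL_EL_left, hWV]
  simp only [tk, map_smul, LinearMap.smul_apply, mulL_single_one, smul_smul] at h3
  rw [← mul_assoc] at h3
  exact smul_cancel (mul_ne_zero (mul_ne_zero (hq n) (hq m)) (hq l)) h3

end Domain

section Transport
variable {A : Type*} [CommRing A] {B : Type*} [CommRing B] (φ : A →+* B)

lemma qInt_map (q : A) (m : ℕ) : φ (qInt q m) = qInt (φ q) m := by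
  simp [qInt, map_sum, map_pow]

lemma qFact_map (q : A) : ∀ n, φ (qFact q n) = qFact (φ q) n
  | 0 => by rw [qFact_zero, qFact_zero, map_one]
  | n + 1 => by rw [qFact_succ, qFact_succ, map_mul, qFact_map q n, qInt_map]

lemma qChoose_map (q : A) : ∀ n k, φ (qChoose q n k) = qChoose (φ q) n k
  | n, 0 => by rw [qChoose_zero_right, qChoose_zero_right, map_one]
  | 0, k + 1 => by
    rw [qChoose_eq_zero_of_lt q (Nat.succ_pos k), qChoose_eq_zero_of_lt (φ q) (Nat.succ_pos k),
      map_zero]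
  | n + 1, k + 1 => by
    rw [qChoose_succ_succ, qChoose_succ_succ, map_add, map_mul, map_pow,
      qChoose_map q n k, qChoose_map q n (k + 1)]

lemma dpCoeff_map (q y : A) (m n i : ℕ) :
    φ (dpCoeff q y m n i) = dpCoeff (φ q) (φ y) m n i := by
  unfold dpCoeff
  rw [map_mul, map_mul, map_mul, map_mul, map_pow, map_pow, map_pow, map_neg, map_one,
    qChoose_map, qChoose_map]

noncomputable def FR : (ℕ →₀ A) →+ (ℕ →₀ B) :=
  Finsupp.mapRange.addMonoidHom φ.toAddMonoidHom

lemma FR_apply (u : ℕ →₀ A) (a : ℕ) : FR φ u a = φ (u a) := by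
  simp [FR, Finsupp.mapRange.addMonoidHom, Finsupp.mapRange_apply]

lemma FR_single (k : ℕ) (a : A) : FR φ (Finsupp.single k a) = Finsupp.single k (φ a) := by
  ext b
  rw [FR_apply]
  simp only [Finsupp.single_apply]
  split <;> simp

lemma FR_smul (c : A) (u : ℕ →₀ A) : FR φ (c • u) = φ c • FR φ u := by
  ext a
  rw [FR_apply, Finsupp.smul_apply, Finsupp.smul_apply, FR_apply, smul_eq_mul, smul_eq_mul,
    map_mul]

lemma FR_mulB (q y : A) (m n : ℕ) : FR φ (mulB q y m n) = mulB (φ q) (φ y) m n := by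
  rw [mulB, map_sum, mulB]
  refine Finset.sum_congr rfl fun i _ => ?_
  rw [FR_smul, FR_single, map_one, dpCoeff_map]

lemma FR_mulL (q y : A) (u v : ℕ →₀ A) :
    FR φ (mulL q y u v) = mulL (φ q) (φ y) (FR φ u) (FR φ v) := by
  induction u using Finsupp.induction_linear with
  | zero => simp [map_zero, LinearMap.zero_apply]
  | add f g hf hg => simp only [map_add, LinearMap.add_apply, hf, hg]
  | single a b =>
    induction v using Finsupp.induction_linear with
    | zero => simp [map_zero]
    | add f g hf hg => simp only [map_add, hf, hg]
    | single c d =>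
      rw [mulL_single_single, FR_smul, FR_mulB, FR_single, FR_single, mulL_single_single,
        map_mul]

end Transport

/-! the universal ring -/

abbrev U := Polynomial (Polynomial ℤ)

noncomputable def qU : U := Polynomial.C Polynomial.X
noncomputable def yU : U := Polynomial.X

lemma qInt_one_int (m : ℕ) : qInt (1 : ℤ) m = m := by simp [qInt]

lemma qFact_one_int_pos : ∀ k, 0 < qFact (1 : ℤ) k
  | 0 => by rw [qFact_zero]; norm_num
  | k + 1 => by
    rw [qFact_succ, qInt_one_int]
    have := qFact_one_int_pos k
    positivity

lemma qFact_X_ne_zero (k : ℕ) : qFact (Polynomial.X : Polynomial ℤ) k ≠ 0 := by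
  intro h
  have := congrArg (Polynomial.eval 1) h
  rw [Polynomial.eval_zero] at this
  have h2 : (Polynomial.evalRingHom (1:ℤ)) (qFact Polynomial.X k) = qFact ((Polynomial.evalRingHom (1:ℤ)) Polynomial.X) k :=
    qFact_map _ _ k
  rw [Polynomial.coe_evalRingHom] at h2
  rw [h2] at this
  rw [Polynomial.eval_X] at this
  exact (qFact_one_int_pos k).ne' this

lemma qFact_qU_ne_zero (k : ℕ) : qFact qU k ≠ 0 := by
  intro h
  have h2 : (Polynomial.C : Polynomial ℤ →+* U) (qFact Polynomial.X k) = qFact qU k :=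
    qFact_map _ _ k
  rw [h, Polynomial.C_eq_zero] at h2
  exact qFact_X_ne_zero k h2


section Final
variable {A : Type*} [CommRing A] (q y : A)

noncomputable def φU (q y : A) : U →+* A :=
  Polynomial.eval₂RingHom (Polynomial.eval₂RingHom (Int.castRingHom A) q) y

lemma φU_qU : φU q y qU = q := by
  rw [φU, qU, Polynomial.coe_eval₂RingHom, Polynomial.eval₂_C, Polynomial.coe_eval₂RingHom,
    Polynomial.eval₂_X]

lemma φU_yU : φU q y yU = y := by
  rw [φU, yU, Polynomial.coe_eval₂RingHom, Polynomial.eval₂_X]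

lemma mulB_comm (m n : ℕ) : mulB q y m n = mulB q y n m := by
  have h := mulB_comm_dom qU yU qFact_qU_ne_zero m n
  have h2 := congrArg (FR (φU q y)) h
  rwa [FR_mulB, FR_mulB, φU_qU, φU_yU] at h2

lemma mulB_assoc (l m n : ℕ) :
    mulL q y (mulB q y l m) (Finsupp.single n 1)
      = mulL q y (Finsupp.single l 1) (mulB q y m n) := by
  have h := mulB_assoc_dom qU yU qFact_qU_ne_zero l m n
  have h2 := congrArg (FR (φU q y)) h
  rwa [FR_mulL, FR_mulL, FR_mulB, FR_mulB, FR_single, FR_single, map_one, φU_qU, φU_yU] at h2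

lemma single_eq_smul (k : ℕ) (b : A) : Finsupp.single k b = b • Finsupp.single k 1 := by
  rw [Finsupp.smul_single, smul_eq_mul, mul_one]

lemma mulL_comm (f g : ℕ →₀ A) : mulL q y f g = mulL q y g f := by
  induction f using Finsupp.induction_linear with
  | zero => simp only [map_zero, LinearMap.zero_apply]
  | add f₁ f₂ h₁ h₂ => simp only [map_add, LinearMap.add_apply, h₁, h₂]
  | single a b =>
    induction g using Finsupp.induction_linear with
    | zero => simp only [map_zero, LinearMap.zero_apply]
    | add g₁ g₂ h₁ h₂ => simp only [map_add, LinearMap.add_apply, h₁, h₂]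
    | single c d =>
      rw [mulL_single_single, mulL_single_single, mulB_comm, mul_comm]

lemma mulL_assoc (f g h : ℕ →₀ A) :
    mulL q y (mulL q y f g) h = mulL q y f (mulL q y g h) := by
  induction f using Finsupp.induction_linear with
  | zero => simp only [map_zero, LinearMap.zero_apply]
  | add f₁ f₂ h₁ h₂ => simp only [map_add, LinearMap.add_apply, h₁, h₂]
  | single a b =>
    induction g using Finsupp.induction_linear with
    | zero => simp only [map_zero, LinearMap.zero_apply]
    | add g₁ g₂ h₁ h₂ => simp only [map_add, LinearMap.add_apply, h₁, h₂]
    | single c d =>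
      induction h using Finsupp.induction_linear with
      | zero => simp only [map_zero, LinearMap.zero_apply]
      | add p₁ p₂ ip₁ ip₂ => simp only [map_add, ip₁, ip₂]
      | single e k =>
        calc mulL q y (mulL q y (Finsupp.single a b) (Finsupp.single c d)) (Finsupp.single e k)
            = (b * d) • (k • mulL q y (mulB q y a c) (Finsupp.single e 1)) := by
              rw [mulL_single_single, map_smul, LinearMap.smul_apply,
                single_eq_smul e k, map_smul]
          _ = (b * d * k) • mulL q y (Finsupp.single a 1) (mulB q y c e) := by
              rw [mulB_assoc, smul_smul]
          _ = (d * k) • (b • mulL q y (Finsupp.single a 1) (mulB q y c e)) := by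
              rw [smul_smul]; congr 1; ring
          _ = mulL q y (Finsupp.single a b) (mulL q y (Finsupp.single c d) (Finsupp.single e k)) := by
              rw [mulL_single_single, map_smul, single_eq_smul a b, map_smul,
                LinearMap.smul_apply]

lemma mulB_zero_left (n : ℕ) : mulB q y 0 n = Finsupp.single n 1 := by
  rw [mulB, Nat.zero_min, Finset.sum_range_one]
  have h1 : dpCoeff q y 0 n 0 = 1 := by
    unfold dpCoeff
    rw [qChoose_zero_right, qChoose_zero_right]
    norm_num
  rw [h1, one_smul, Nat.zero_add, Nat.sub_zero]

lemma mulL_one_left (f : ℕ →₀ A) : mulL q y (Finsupp.single 0 1) f = f := by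
  induction f using Finsupp.induction_linear with
  | zero => simp only [map_zero]
  | add f₁ f₂ h₁ h₂ => simp only [map_add, h₁, h₂]
  | single a b =>
    rw [mulL_single_single, mulB_zero_left, one_mul, ← single_eq_smul]


lemma T_base (T : Polynomial A →ₗ[A] (ℕ →₀ A))
    (hT : ∀ n : ℕ, T (twistedPow q y n) = qFact q n • Finsupp.single n (1 : A)) (a b : ℕ) :
    T (twistedPow q y a * twistedPow q y b)
      = mulL q y (T (twistedPow q y a)) (T (twistedPow q y b)) := by
  rw [key q y a b, map_sum, hT, hT]
  have hR : mulL q y (qFact q a • Finsupp.single a (1:A)) (qFact q b • Finsupp.single b (1:A))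
      = EL q (Dco q y a b) := by
    rw [show (qFact q a • Finsupp.single a (1:A)) = tk q a from rfl,
      show (qFact q b • Finsupp.single b (1:A)) = tk q b from rfl, mulL_tk]
  rw [hR, Dco, map_sum]
  refine Finset.sum_congr rfl fun i _ => ?_
  rw [← smul_eq_C_mul, map_smul, hT, EL_single, smul_smul]

lemma T_mul (T : Polynomial A →ₗ[A] (ℕ →₀ A))
    (hT : ∀ n : ℕ, T (twistedPow q y n) = qFact q n • Finsupp.single n (1 : A))
    (f g : Polynomial A) : T (f * g) = mulL q y (T f) (T g) := by
  have main : ∀ f, f ∈ Submodule.span A (Set.range (twistedPow q y)) →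
      ∀ g, g ∈ Submodule.span A (Set.range (twistedPow q y)) →
      T (f * g) = mulL q y (T f) (T g) := by
    intro f hf
    induction hf using Submodule.span_induction with
    | mem x hx =>
      obtain ⟨a, rfl⟩ := hx
      intro g hg
      induction hg using Submodule.span_induction with
      | mem z hz =>
        obtain ⟨b, rfl⟩ := hz
        exact T_base q y T hT a b
      | zero => simp only [mul_zero, map_zero]
      | add u v hu hv ihu ihv =>
        simp only [mul_add, map_add, ihu, ihv]
      | smul c u hu ihu =>
        simp only [Algebra.mul_smul_comm, map_smul, ihu]
    | zero => intro g hg; simp only [zero_mul, map_zero, LinearMap.zero_apply]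
    | add u v hu hv ihu ihv =>
      intro g hg
      simp only [add_mul, map_add, LinearMap.add_apply, ihu g hg, ihv g hg]
    | smul c u hu ihu =>
      intro g hg
      simp only [Algebra.smul_mul_assoc, map_smul, LinearMap.smul_apply, ihu g hg]
  exact main f (tp_span q y f.natDegree f le_rfl) g (tp_span q y g.natDegree g le_rfl)

lemma ideal_mem (n : ℕ) (f g : ℕ →₀ A)
    (hf : f ∈ Submodule.span A {x : ℕ →₀ A | ∃ k > n, x = Finsupp.single k (1 : A)}) :
    mulL q y g f ∈ Submodule.span A {x : ℕ →₀ A | ∃ k > n, x = Finsupp.single k (1 : A)} := by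
  induction g using Finsupp.induction_linear with
  | zero => simp only [map_zero, LinearMap.zero_apply]; exact Submodule.zero_mem _
  | add g₁ g₂ h₁ h₂ =>
    simp only [map_add, LinearMap.add_apply]
    exact Submodule.add_mem _ h₁ h₂
  | single m b =>
    induction hf using Submodule.span_induction with
    | mem x hx =>
      obtain ⟨k, hk, rfl⟩ := hx
      rw [mulL_single_single]
      refine Submodule.smul_mem _ _ ?_
      rw [mulB]
      refine Submodule.sum_mem _ fun i hi => ?_
      rw [Finset.mem_range] at hi
      refine Submodule.smul_mem _ _ (Submodule.subset_span ?_)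
      have h1 := Nat.min_le_right m k
      exact ⟨m + k - i, by omega, rfl⟩
    | zero => simp only [map_zero]; exact Submodule.zero_mem _
    | add u v hu hv ihu ihv =>
      simp only [map_add]
      exact Submodule.add_mem _ ihu ihv
    | smul c u hu ihu =>
      simp only [map_smul]
      exact Submodule.smul_mem _ _ ihu

end Final

end QAux

/-- On the free `A`-module `A⟨ξ⟩ = ℕ →₀ A` with basis `ξ^{[n]} = single n 1`, the multiplication
rule `ξ^{[m]} ξ^{[n]} = Σ_i dpCoeff q y m n i • ξ^{[m+n−i]}` extends to an `A`-bilinear,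
commutative, associative multiplication with unit `ξ^{[0]}`; the `A`-linear map `A[ξ] → A⟨ξ⟩`
with `ξ^{(n)} ↦ (n)_q! ξ^{[n]}` is multiplicative (a morphism of `A`-algebras); and each
submodule `I^{[n+1]}` spanned by the `ξ^{[k]}` with `k > n` is an ideal. -/
theorem statement3 {R A : Type*} [CommRing R] [CommRing A] [Algebra R A] (q : R) (y : A) :
    ∃ mul : (ℕ →₀ A) →ₗ[A] (ℕ →₀ A) →ₗ[A] (ℕ →₀ A),
      (∀ m n : ℕ, mul (Finsupp.single m 1) (Finsupp.single n 1) =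
        ∑ i ∈ Finset.range (min m n + 1),
          dpCoeff (algebraMap R A q) y m n i • Finsupp.single (m + n - i) (1 : A)) ∧
      (∀ f g : ℕ →₀ A, mul f g = mul g f) ∧
      (∀ f g h : ℕ →₀ A, mul (mul f g) h = mul f (mul g h)) ∧
      (∀ f : ℕ →₀ A, mul (Finsupp.single 0 1) f = f) ∧
      (∀ T : Polynomial A →ₗ[A] (ℕ →₀ A),
        (∀ n : ℕ, T (twistedPow (algebraMap R A q) y n) =
          qFact (algebraMap R A q) n • Finsupp.single n (1 : A)) →
        ∀ f g : Polynomial A, T (f * g) = mul (T f) (T g)) ∧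
      (∀ n : ℕ, ∀ f g : ℕ →₀ A,
        f ∈ Submodule.span A {x : ℕ →₀ A | ∃ k > n, x = Finsupp.single k (1 : A)} →
        mul g f ∈ Submodule.span A {x : ℕ →₀ A | ∃ k > n, x = Finsupp.single k (1 : A)}) := by
  refine ⟨QAux.mulL (algebraMap R A q) y, fun m n => ?_, QAux.mulL_comm _ y,
    QAux.mulL_assoc _ y, QAux.mulL_one_left _ y, QAux.T_mul _ y, QAux.ideal_mem _ y⟩
  rw [QAux.mulL_single_one, QAux.mulB]
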